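/- For every open neighborhood N of the north pole (0,1) in S², there exist distinct points a, b ∈ N with q(a) = q(b); consequently, the quotient map q : S² → X is not a local homeomorphism. -/

import Mathlib

noncomputable section

/-- The 2-sphere, realized as the unit sphere `{(c,z) : |c|² + z² = 1}` in `ℂ × ℝ`,
with the subspace topology. -/
def TwoSphere : Set (ℂ × ℝ) := {p | ‖p.1‖ ^ 2 + p.2 ^ 2 = 1}

/-- The relation `r₀` on `S²`: `r₀ (c,z) (c',z')` iff `z ≠ 0`, `c' = -c` and `z' = z`. -/
def sphRel (a b : TwoSphere) : Prop :=
  a.1.2 ≠ 0 ∧ b.1.1 = -a.1.1 ∧ b.1.2 = a.1.2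

/-- The twisted sphere `X`: the quotient of `S²` by the equivalence relation generated
by `r₀`, with the quotient topology. -/
abbrev TwistedSphere : Type := Quot (Relation.EqvGen sphRel)

/-- The quotient map `q : S² → X`. -/
abbrev sphQ : TwoSphere → TwistedSphere := Quot.mk (Relation.EqvGen sphRel)

/-- The north pole `(0,1)` of `S²`. -/
def northPole : TwoSphere := ⟨((0 : ℂ), (1 : ℝ)), by simp [TwoSphere]⟩

/-- A family of points on the sphere near the north pole. -/
def sphPt (t : ℝ) (h1 : 0 ≤ t) (h2 : t ≤ 1) : TwoSphere :=
  ⟨((t : ℂ), Real.sqrt (1 - t ^ 2)), by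
    have : (0:ℝ) ≤ 1 - t ^ 2 := by nlinarith
    simp [TwoSphere, Real.sq_sqrt this, abs_of_nonneg h1]⟩

def sphPt' (t : ℝ) (h1 : 0 ≤ t) (h2 : t ≤ 1) : TwoSphere :=
  ⟨((-t : ℂ), Real.sqrt (1 - t ^ 2)), by
    have : (0:ℝ) ≤ 1 - t ^ 2 := by nlinarith
    simp [TwoSphere, Real.sq_sqrt this, abs_of_nonneg h1]⟩

theorem stmt_8_aux (N : Set TwoSphere) (hN : IsOpen N) (hmem : northPole ∈ N) :
    ∃ a b : TwoSphere, a ∈ N ∧ b ∈ N ∧ a ≠ b ∧ sphQ a = sphQ b := by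
  rw [Metric.isOpen_iff] at hN
  obtain ⟨ε, hε, hball⟩ := hN northPole hmem
  set t : ℝ := min (ε / 2) (1 / 2) with ht
  have ht0 : 0 < t := lt_min (by linarith) (by norm_num)
  have ht1 : t ≤ 1 / 2 := min_le_right _ _
  have ht1' : t ≤ 1 := by linarith
  have htε : t < ε := lt_of_le_of_lt (min_le_left _ _) (by linarith)
  have hsq : (0:ℝ) ≤ 1 - t ^ 2 := by nlinarith
  have hzdist : dist (Real.sqrt (1 - t ^ 2)) 1 < ε := by
    rw [Real.dist_eq]
    have h1 : 1 - t ^ 2 ≤ Real.sqrt (1 - t ^ 2) := by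
      nlinarith [Real.sq_sqrt hsq, Real.sqrt_nonneg (1 - t ^ 2),
        Real.sqrt_le_one.mpr (by nlinarith : 1 - t ^ 2 ≤ 1)]
    have h2 : Real.sqrt (1 - t ^ 2) ≤ 1 := Real.sqrt_le_one.mpr (by nlinarith)
    rw [abs_of_nonpos (by linarith)]
    nlinarith
  have hz0 : Real.sqrt (1 - t ^ 2) ≠ 0 :=
    ne_of_gt (Real.sqrt_pos.mpr (by nlinarith))
  refine ⟨sphPt t ht0.le ht1', sphPt' t ht0.le ht1', ?_, ?_, ?_, ?_⟩
  · apply hball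
    simp only [Metric.mem_ball, Subtype.dist_eq, sphPt, northPole, Prod.dist_eq]
    apply max_lt _ hzdist
    rw [Complex.dist_eq]
    simpa [abs_of_nonneg ht0.le] using htε
  · apply hball
    simp only [Metric.mem_ball, Subtype.dist_eq, sphPt', northPole, Prod.dist_eq]
    apply max_lt _ hzdist
    rw [Complex.dist_eq]
    simpa [abs_of_nonneg ht0.le] using htε
  · intro h
    have := congrArg (fun p : TwoSphere => p.1.1) h
    simp only [sphPt, sphPt'] at this
    have : (t : ℂ) = -t := this
    have : (t : ℝ) = -t := by exact_mod_cast this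
    linarith
  · apply Quot.sound
    apply Relation.EqvGen.rel
    refine ⟨hz0, ?_, rfl⟩
    simp [sphPt, sphPt']

/-- every open neighborhood `N` of the north pole in `S²` contains two
distinct points with the same image under `q`; consequently the quotient map
`q : S² → X` is not a local homeomorphism. -/
theorem stmt_8 :
    (∀ N : Set TwoSphere, IsOpen N → northPole ∈ N →
      ∃ a b : TwoSphere, a ∈ N ∧ b ∈ N ∧ a ≠ b ∧ sphQ a = sphQ b) ∧
    ¬ IsLocalHomeomorph sphQ := by
  refine ⟨stmt_8_aux, ?_⟩
  intro h
  obtain ⟨e, hmem, heq⟩ := h northPole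
  obtain ⟨a, b, ha, hb, hab, hq⟩ := stmt_8_aux e.source e.open_source hmem
  exact hab (e.injOn ha hb (by rw [heq] at hq; exact hq))
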